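/- Let 𝒮 and 𝒜 be finite sets and γ ∈ (0,1). Let (r₁, P₁) and (r₂, P₂) be two Markov decision processes on 𝒮 × 𝒜 with rewards bounded by |r_i(s,a)| ≤ R, reward gap |r₁(s,a) − r₂(s,a)| ≤ ε_r for all (s,a), and transition gap Σ_{s'} |P₁(s'|s,a) − P₂(s'|s,a)| ≤ ε_P for all (s,a). Let Q₁*, Q₂* : 𝒮 × 𝒜 → ℝ be the optimal state–action value functions, i.e., the (unique bounded) solutions of the Bellman optimality equations Q_i*(s,a) = r_i(s,a) + γ Σ_{s'} P_i(s'|s,a) max_b Q_i*(s',b). Then for every (s,a): |Q₁*(s,a) − Q₂*(s,a)| ≤ ε_r/(1−γ) + R·γ·ε_P/(1−γ)². -/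

import Mathlib

open BigOperators

lemma fin_ciSup_sub_le {ι : Type*} [Fintype ι] [Nonempty ι] (f g : ι → ℝ) :
    (⨆ i, f i) - (⨆ i, g i) ≤ ⨆ i, |f i - g i| := by
  have hb : ∀ h : ι → ℝ, BddAbove (Set.range h) :=
    fun h => (Set.finite_range h).bddAbove
  rw [sub_le_iff_le_add]
  apply ciSup_le
  intro i
  have h1 : f i ≤ g i + |f i - g i| := by
    have := le_abs_self (f i - g i); linarith
  calc f i ≤ g i + |f i - g i| := h1
    _ ≤ (⨆ i, g i) + ⨆ i, |f i - g i| :=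
        add_le_add (le_ciSup (hb g) i) (le_ciSup (hb fun i => |f i - g i|) i)
    _ = (⨆ i, |f i - g i|) + ⨆ i, g i := add_comm _ _

lemma fin_ciSup_abs_sub {ι : Type*} [Fintype ι] [Nonempty ι] (f g : ι → ℝ) :
    |(⨆ i, f i) - (⨆ i, g i)| ≤ ⨆ i, |f i - g i| := by
  rw [abs_sub_le_iff]
  refine ⟨fin_ciSup_sub_le f g, ?_⟩
  simpa [abs_sub_comm] using fin_ciSup_sub_le g f

/-- simulation lemma for optimal Q-functions of two nearby MDPs. -/
theorem optimal_Q_perturbation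
    {S A : Type*} [Fintype S] [Fintype A] [Nonempty S] [Nonempty A]
    (γ : ℝ) (hγ0 : 0 < γ) (hγ1 : γ < 1)
    (r₁ r₂ : S → A → ℝ) (P₁ P₂ : S → A → S → ℝ)
    (R εr εP : ℝ)
    (hP₁0 : ∀ s a s', 0 ≤ P₁ s a s') (hP₁1 : ∀ s a, ∑ s', P₁ s a s' = 1)
    (hP₂0 : ∀ s a s', 0 ≤ P₂ s a s') (hP₂1 : ∀ s a, ∑ s', P₂ s a s' = 1)
    (hR₁ : ∀ s a, |r₁ s a| ≤ R) (hR₂ : ∀ s a, |r₂ s a| ≤ R)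
    (hr : ∀ s a, |r₁ s a - r₂ s a| ≤ εr)
    (hP : ∀ s a, ∑ s', |P₁ s a s' - P₂ s a s'| ≤ εP)
    (Q₁ Q₂ : S → A → ℝ)
    (hQ₁ : ∀ s a, Q₁ s a = r₁ s a + γ * ∑ s', P₁ s a s' * (⨆ b, Q₁ s' b))
    (hQ₂ : ∀ s a, Q₂ s a = r₂ s a + γ * ∑ s', P₂ s a s' * (⨆ b, Q₂ s' b)) :
    ∀ s a, |Q₁ s a - Q₂ s a| ≤ εr / (1 - γ) + R * γ * εP / (1 - γ)^2 := by
  classical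
  have h1γ : 0 < 1 - γ := by linarith
  obtain ⟨s₀⟩ := (inferInstance : Nonempty S)
  obtain ⟨a₀⟩ := (inferInstance : Nonempty A)
  have hεP : 0 ≤ εP :=
    le_trans (Finset.sum_nonneg fun _ _ => abs_nonneg _) (hP s₀ a₀)
  have hR0 : 0 ≤ R := le_trans (abs_nonneg _) (hR₁ s₀ a₀)
  set V₁ : S → ℝ := fun s => ⨆ b, Q₁ s b with hV₁def
  set V₂ : S → ℝ := fun s => ⨆ b, Q₂ s b with hV₂def
  set B : ℝ := ⨆ p : S × A, |Q₂ p.1 p.2| with hBdef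
  have hBd : ∀ s a, |Q₂ s a| ≤ B := fun s a => le_ciSup (Set.finite_range fun p : S × A => |Q₂ p.1 p.2|).bddAbove (s, a)
  have hB0 : 0 ≤ B := le_trans (abs_nonneg _) (hBd s₀ a₀)
  have hV₂B : ∀ s, |V₂ s| ≤ B := by
    intro s
    rw [abs_le]
    constructor
    · calc -B ≤ -|Q₂ s a₀| := by linarith [hBd s a₀]
        _ ≤ Q₂ s a₀ := neg_abs_le _
        _ ≤ V₂ s := le_ciSup (Set.finite_range _).bddAbove a₀
    · exact ciSup_le fun b => le_trans (le_abs_self _) (hBd s b)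
  -- bound on B
  have hBbound : B * (1 - γ) ≤ R := by
    have hB1 : B ≤ R + γ * B := by
      apply ciSup_le
      rintro ⟨s, a⟩
      have hsum : |∑ s', P₂ s a s' * V₂ s'| ≤ B := by
        calc |∑ s', P₂ s a s' * V₂ s'| ≤ ∑ s', |P₂ s a s' * V₂ s'| :=
              Finset.abs_sum_le_sum_abs _ _
          _ ≤ ∑ s', P₂ s a s' * B := by
              apply Finset.sum_le_sum
              intro s' _
              rw [abs_mul, abs_of_nonneg (hP₂0 s a s')]
              exact mul_le_mul_of_nonneg_left (hV₂B s') (hP₂0 s a s')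
          _ = B := by rw [← Finset.sum_mul, hP₂1 s a, one_mul]
      calc |Q₂ s a| = |r₂ s a + γ * ∑ s', P₂ s a s' * V₂ s'| := by rw [hQ₂ s a]
        _ ≤ |r₂ s a| + |γ * ∑ s', P₂ s a s' * V₂ s'| := abs_add_le _ _
        _ ≤ R + γ * B := by
            rw [abs_mul, abs_of_pos hγ0]
            exact add_le_add (hR₂ s a) (mul_le_mul_of_nonneg_left hsum hγ0.le)
    nlinarith
  set D : ℝ := ⨆ p : S × A, |Q₁ p.1 p.2 - Q₂ p.1 p.2| with hDdef
  have hDd : ∀ s a, |Q₁ s a - Q₂ s a| ≤ D := fun s a => le_ciSup (Set.finite_range fun p : S × A => |Q₁ p.1 p.2 - Q₂ p.1 p.2|).bddAbove (s, a)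
  have hVD : ∀ s, |V₁ s - V₂ s| ≤ D := by
    intro s
    refine le_trans (fin_ciSup_abs_sub _ _) (ciSup_le fun b => hDd s b)
  have hDbound : D ≤ εr + γ * (D + εP * B) := by
    apply ciSup_le
    rintro ⟨s, a⟩
    have hsplit : (∑ s', P₁ s a s' * V₁ s') - (∑ s', P₂ s a s' * V₂ s')
        = (∑ s', P₁ s a s' * (V₁ s' - V₂ s')) + ∑ s', (P₁ s a s' - P₂ s a s') * V₂ s' := by
      rw [← Finset.sum_add_distrib, ← Finset.sum_sub_distrib]
      apply Finset.sum_congr rfl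
      intro s' _
      ring
    have h1 : |∑ s', P₁ s a s' * (V₁ s' - V₂ s')| ≤ D := by
      calc |∑ s', P₁ s a s' * (V₁ s' - V₂ s')| ≤ ∑ s', |P₁ s a s' * (V₁ s' - V₂ s')| :=
            Finset.abs_sum_le_sum_abs _ _
        _ ≤ ∑ s', P₁ s a s' * D := by
            apply Finset.sum_le_sum
            intro s' _
            rw [abs_mul, abs_of_nonneg (hP₁0 s a s')]
            exact mul_le_mul_of_nonneg_left (hVD s') (hP₁0 s a s')
        _ = D := by rw [← Finset.sum_mul, hP₁1 s a, one_mul]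
    have h2 : |∑ s', (P₁ s a s' - P₂ s a s') * V₂ s'| ≤ εP * B := by
      calc |∑ s', (P₁ s a s' - P₂ s a s') * V₂ s'|
          ≤ ∑ s', |(P₁ s a s' - P₂ s a s') * V₂ s'| := Finset.abs_sum_le_sum_abs _ _
        _ ≤ ∑ s', |P₁ s a s' - P₂ s a s'| * B := by
            apply Finset.sum_le_sum
            intro s' _
            rw [abs_mul]
            exact mul_le_mul_of_nonneg_left (hV₂B s') (abs_nonneg _)
        _ = (∑ s', |P₁ s a s' - P₂ s a s'|) * B := by rw [Finset.sum_mul]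
        _ ≤ εP * B := mul_le_mul_of_nonneg_right (hP s a) hB0
    calc |Q₁ s a - Q₂ s a|
        = |(r₁ s a - r₂ s a) + γ * ((∑ s', P₁ s a s' * V₁ s') - (∑ s', P₂ s a s' * V₂ s'))| := by
          rw [hQ₁ s a, hQ₂ s a]; ring_nf; rfl
      _ ≤ |r₁ s a - r₂ s a| + |γ * ((∑ s', P₁ s a s' * V₁ s') - ∑ s', P₂ s a s' * V₂ s')| :=
          abs_add_le _ _
      _ ≤ εr + γ * (D + εP * B) := by
          rw [abs_mul, abs_of_pos hγ0, hsplit]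
          refine add_le_add (hr s a) (mul_le_mul_of_nonneg_left ?_ hγ0.le)
          calc |(∑ s', P₁ s a s' * (V₁ s' - V₂ s')) + ∑ s', (P₁ s a s' - P₂ s a s') * V₂ s'|
              ≤ |∑ s', P₁ s a s' * (V₁ s' - V₂ s')| + |∑ s', (P₁ s a s' - P₂ s a s') * V₂ s'| :=
              abs_add_le _ _
            _ ≤ D + εP * B := add_le_add h1 h2
  intro s a
  have hDfinal : D ≤ (εr * (1 - γ) + R * γ * εP) / (1 - γ)^2 := by
    rw [le_div_iff₀ (by positivity)]
    nlinarith [mul_nonneg hεP (mul_nonneg hγ0.le h1γ.le)]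
  have heq : εr / (1 - γ) + R * γ * εP / (1 - γ)^2
      = (εr * (1 - γ) + R * γ * εP) / (1 - γ)^2 := by
    field_simp
  rw [heq]
  exact le_trans (hDd s a) hDfinal
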